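/- Every Lipschitz curve in ℝ² is 1-admissible: if G = {ζ·(t + i·f(t)) : t ∈ I} for a finite interval I, a Lipschitz function f : I → ℝ with Lipschitz constant M, and |ζ| = 1, then there is a constant C such that for all a ∈ ℝ² and R, σ > 0, the Lebesgue measure of {y ∉ G : 0 < dist(y, G) ≤ σ} ∩ D(a, R) is at most C·σ·R. -/

import Mathlib

open MeasureTheory Metric Set

/-- Every Lipschitz curve in the plane is `1`-admissible: the `σ`-collar of the curve
intersected with a disc of radius `R` has planar measure at most `C σ R`. -/
theorem lipschitz_curve_one_admissible
    (t₀ t₁ : ℝ) (f : ℝ → ℝ) (M : NNReal)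
    (hf : LipschitzOnWith M f (Set.Icc t₀ t₁))
    (ζ : ℂ) (hζ : ‖ζ‖ = 1) (G : Set ℂ)
    (hG : G = (fun t : ℝ => ζ * (t + f t * Complex.I)) '' Set.Icc t₀ t₁) :
    ∃ C > (0 : ℝ), ∀ (a : ℂ) (R σ : ℝ), 0 < R → 0 < σ →
      MeasureTheory.volume
        ({y : ℂ | y ∉ G ∧ 0 < Metric.infDist y G ∧ Metric.infDist y G ≤ σ} ∩
          Metric.ball a R)
        ≤ ENNReal.ofReal (C * σ * R) := by
  classical
  set γ : ℝ → ℂ := fun t => ζ * (t + f t * Complex.I) with hγdef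
  set L : ℝ := (M : ℝ) + 1 with hLdef
  have hM0 : (0:ℝ) ≤ (M:ℝ) := M.coe_nonneg
  have hL1 : (1:ℝ) ≤ L := by rw [hLdef]; linarith
  have hlow : ∀ t s : ℝ, |t - s| ≤ dist (γ t) (γ s) := by
    intro t s
    rw [dist_eq_norm]
    have h1 : γ t - γ s
        = ζ * (((t - s : ℝ) : ℂ) + ((f t - f s : ℝ) : ℂ) * Complex.I) := by
      simp only [hγdef]; push_cast; ring
    rw [h1, norm_mul, hζ, one_mul]
    have h2 := Complex.abs_re_le_norm (((t - s : ℝ) : ℂ) + ((f t - f s : ℝ) : ℂ) * Complex.I)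
    simpa using h2
  have hup : ∀ t ∈ Set.Icc t₀ t₁, ∀ s ∈ Set.Icc t₀ t₁,
      dist (γ t) (γ s) ≤ L * |t - s| := by
    intro t ht s hs
    rw [dist_eq_norm]
    have h1 : γ t - γ s
        = ζ * (((t - s : ℝ) : ℂ) + ((f t - f s : ℝ) : ℂ) * Complex.I) := by
      simp only [hγdef]; push_cast; ring
    rw [h1, norm_mul, hζ, one_mul]
    have h3 : |f t - f s| ≤ (M:ℝ) * |t - s| := by
      have := hf.dist_le_mul t ht s hs
      simpa [Real.dist_eq] using this
    calc ‖(((t - s : ℝ) : ℂ) + ((f t - f s : ℝ) : ℂ) * Complex.I)‖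
        ≤ ‖(((t - s : ℝ) : ℂ))‖ + ‖((f t - f s : ℝ) : ℂ) * Complex.I‖ := norm_add_le _ _
      _ = |t - s| + |f t - f s| := by
          simp [norm_mul, Complex.norm_I, ← Complex.ofReal_sub,
            Complex.norm_real, Real.norm_eq_abs]
      _ ≤ |t - s| + (M:ℝ) * |t - s| := by linarith
      _ = L * |t - s| := by rw [hLdef]; ring
  have hπ : (NNReal.pi : ENNReal) = ENNReal.ofReal Real.pi := by
    rw [← NNReal.coe_real_pi, ENNReal.ofReal_coe_nnreal]
  refine ⟨9 * Real.pi * (L + 1) ^ 2, by positivity, ?_⟩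
  intro a R σ hR hσ
  set S := ({y : ℂ | y ∉ G ∧ 0 < Metric.infDist y G ∧ Metric.infDist y G ≤ σ} ∩
      Metric.ball a R) with hSdef
  rcases lt_or_ge t₁ t₀ with hts | hts
  · have hGe : G = ∅ := by rw [hG, Set.Icc_eq_empty (not_le.mpr hts), Set.image_empty]
    have hSe : S = ∅ := by
      rw [hSdef, hGe]
      ext y
      simp [Metric.infDist_empty]
    rw [hSe]
    simp
  have hγc : ContinuousOn γ (Set.Icc t₀ t₁) := by
    apply ContinuousOn.mul continuousOn_const
    exact (Complex.continuous_ofReal.continuousOn).add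
      ((Complex.continuous_ofReal.comp_continuousOn hf.continuousOn).mul continuousOn_const)
  have hGc : IsCompact G := hG ▸ isCompact_Icc.image_of_continuousOn hγc
  have hGne : G.Nonempty := by
    rw [hG]; exact ⟨γ t₀, Set.mem_image_of_mem _ (by simp [hts])⟩
  have hnear : ∀ y ∈ S, ∃ t ∈ Set.Icc t₀ t₁, dist y (γ t) ≤ σ := by
    intro y hy
    obtain ⟨x, hxG, hxd⟩ := hGc.exists_infDist_eq_dist hGne y
    rw [hG] at hxG
    obtain ⟨t, ht, rfl⟩ := hxG
    exact ⟨t, ht, by rw [← hxd]; exact hy.1.2.2⟩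
  rcases le_or_gt R σ with hRσ | hσR
  · -- big σ: just use the ball
    calc volume S ≤ volume (Metric.ball a R) := measure_mono Set.inter_subset_right
      _ = ENNReal.ofReal R ^ 2 * NNReal.pi := Complex.volume_ball a R
      _ = ENNReal.ofReal (R ^ 2 * Real.pi) := by
          rw [ENNReal.ofReal_mul (by positivity), ENNReal.ofReal_pow hR.le, hπ]
      _ ≤ ENNReal.ofReal (9 * Real.pi * (L + 1) ^ 2 * σ * R) := by
          apply ENNReal.ofReal_le_ofReal
          have hπ0 := Real.pi_pos
          have h1 : R ^ 2 * Real.pi ≤ σ * R * Real.pi := by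
            nlinarith [mul_le_mul_of_nonneg_right hRσ (mul_nonneg hR.le hπ0.le)]
          have h2 : σ * R * Real.pi ≤ 9 * Real.pi * (L + 1) ^ 2 * σ * R := by
            have h3 : (0:ℝ) ≤ 9 * (L + 1) ^ 2 - 1 := by nlinarith
            nlinarith [mul_nonneg (mul_nonneg (mul_nonneg hσ.le hR.le) hπ0.le) h3]
          linarith
  -- main case: σ < R
  rcases Set.eq_empty_or_nonempty S with hSe | ⟨y₀, hy₀⟩
  · rw [hSe]; simp
  obtain ⟨t₂, ht₂, hd₂⟩ := hnear y₀ hy₀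
  set N : ℕ := ⌊8 * R / σ⌋₊ + 1 with hNdef
  set c : ℕ → ℂ := fun k => γ (max t₀ (min t₁ (t₂ - 4 * R + k * σ))) with hcdef
  have clamp : ∀ t u : ℝ, t ∈ Set.Icc t₀ t₁ → |t - max t₀ (min t₁ u)| ≤ |t - u| := by
    intro t u ht
    obtain ⟨h1, h2⟩ := ht
    rcases le_total u t₀ with h | h
    · rw [min_eq_right (h.trans hts), max_eq_left h,
        abs_of_nonneg (by linarith), abs_of_nonneg (by linarith)]
      linarith
    · rcases le_total u t₁ with h' | h'
      · rw [min_eq_right h', max_eq_right h]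
      · rw [min_eq_left h', max_eq_right hts,
          abs_of_nonpos (by linarith), abs_of_nonpos (by linarith)]
        linarith
  have hcover : S ⊆ ⋃ k ∈ Finset.range N, Metric.closedBall (c k) ((L + 1) * σ) := by
    intro y hy
    obtain ⟨t, ht, hd⟩ := hnear y hy
    have hya : dist y a < R := mem_ball.mp hy.2
    have hy₀a : dist y₀ a < R := mem_ball.mp hy₀.2
    have h4 : |t - t₂| ≤ 4 * R := by
      have hd1 := hlow t t₂
      have hd2 : dist (γ t) (γ t₂) ≤ dist (γ t) y + (dist y a + dist a y₀ + dist y₀ (γ t₂)) :=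
        le_trans (dist_triangle _ y _) (by linarith [dist_triangle4 y a y₀ (γ t₂)])
      have e1 : dist (γ t) y = dist y (γ t) := dist_comm _ _
      have e2 : dist a y₀ = dist y₀ a := dist_comm _ _
      linarith
    set x : ℝ := t - (t₂ - 4 * R) with hxdef
    have hx0 : 0 ≤ x := by
      have := abs_le.mp h4
      rw [hxdef]; linarith [this.1]
    have hx8 : x ≤ 8 * R := by
      have := abs_le.mp h4
      rw [hxdef]; linarith [this.2]
    set k : ℕ := ⌊x / σ⌋₊ with hkdef
    have hkN : k < N := by
      rw [hNdef]
      exact Nat.lt_succ_of_le (Nat.floor_le_floor (by gcongr))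
    have hfl1 : (k : ℝ) * σ ≤ x := by
      have := Nat.floor_le (show (0:ℝ) ≤ x / σ by positivity)
      calc (k : ℝ) * σ ≤ x / σ * σ := by
            apply mul_le_mul_of_nonneg_right _ hσ.le
            rw [hkdef]; exact this
        _ = x := div_mul_cancel₀ _ hσ.ne'
    have hfl2 : x < ((k : ℝ) + 1) * σ := by
      have := Nat.lt_floor_add_one (x / σ)
      calc x = x / σ * σ := (div_mul_cancel₀ _ hσ.ne').symm
        _ < ((k : ℝ) + 1) * σ := by
            apply mul_lt_mul_of_pos_right _ hσ
            rw [hkdef]; exact this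
    have hks : |t - (t₂ - 4 * R + k * σ)| ≤ σ := by
      rw [abs_le]
      constructor
      · have : t - (t₂ - 4 * R + k * σ) = x - k * σ := by rw [hxdef]; ring
        rw [this]; linarith
      · have : t - (t₂ - 4 * R + k * σ) = x - k * σ := by rw [hxdef]; ring
        rw [this]; nlinarith
    have hsI : max t₀ (min t₁ (t₂ - 4 * R + k * σ)) ∈ Set.Icc t₀ t₁ :=
      ⟨le_max_left _ _, max_le hts (min_le_left _ _)⟩
    have hts' : |t - max t₀ (min t₁ (t₂ - 4 * R + k * σ))| ≤ σ :=
      le_trans (clamp t _ ht) hks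
    have hdc : dist y (c k) ≤ (L + 1) * σ := by
      have h5 : dist (γ t) (c k) ≤ L * σ := by
        calc dist (γ t) (c k) ≤ L * |t - max t₀ (min t₁ (t₂ - 4 * R + k * σ))| :=
              hup t ht _ hsI
          _ ≤ L * σ := by
              apply mul_le_mul_of_nonneg_left hts' (by linarith)
      calc dist y (c k) ≤ dist y (γ t) + dist (γ t) (c k) := dist_triangle _ _ _
        _ ≤ σ + L * σ := add_le_add hd h5
        _ = (L + 1) * σ := by ring
    exact Set.mem_biUnion (Finset.mem_range.mpr hkN) (mem_closedBall.mpr hdc)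
  have hNR : (N : ℝ) * σ ≤ 9 * R := by
    have hfl : (⌊8 * R / σ⌋₊ : ℝ) ≤ 8 * R / σ := Nat.floor_le (by positivity)
    have h1 : (1:ℝ) ≤ R / σ := (one_le_div hσ).mpr hσR.le
    have hN : (N : ℝ) ≤ 9 * R / σ := by
      rw [hNdef]
      push_cast
      have : 8 * R / σ + R / σ = 9 * R / σ := by ring
      linarith
    calc (N : ℝ) * σ ≤ 9 * R / σ * σ := mul_le_mul_of_nonneg_right hN hσ.le
      _ = 9 * R := div_mul_cancel₀ _ hσ.ne'
  calc volume S ≤ volume (⋃ k ∈ Finset.range N, Metric.closedBall (c k) ((L + 1) * σ)) :=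
        measure_mono hcover
    _ ≤ ∑ k ∈ Finset.range N, volume (Metric.closedBall (c k) ((L + 1) * σ)) :=
        measure_biUnion_finset_le _ _
    _ = N * (ENNReal.ofReal ((L + 1) * σ) ^ 2 * NNReal.pi) := by
        simp [Complex.volume_closedBall, Finset.sum_const, nsmul_eq_mul]
    _ = ENNReal.ofReal ((N : ℝ) * (((L + 1) * σ) ^ 2 * Real.pi)) := by
        rw [ENNReal.ofReal_mul (Nat.cast_nonneg N), ENNReal.ofReal_natCast]
        congr 1
        rw [ENNReal.ofReal_mul (by positivity : (0:ℝ) ≤ ((L + 1) * σ) ^ 2),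
          ENNReal.ofReal_pow (by positivity : (0:ℝ) ≤ (L + 1) * σ), hπ]
    _ ≤ ENNReal.ofReal (9 * Real.pi * (L + 1) ^ 2 * σ * R) := by
        apply ENNReal.ofReal_le_ofReal
        have hπ0 := Real.pi_pos
        have key : (N : ℝ) * σ * (σ * ((L + 1) ^ 2 * Real.pi))
            ≤ 9 * R * (σ * ((L + 1) ^ 2 * Real.pi)) :=
          mul_le_mul_of_nonneg_right hNR (by positivity)
        nlinarith [key]
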